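/- Let G be a finite abelian group and B : G × G → ℚ/ℤ a ℤ-bilinear pairing that is nondegenerate on both sides (if B(x,y) = 0 for all y then x = 0, and if B(x,y) = 0 for all x then y = 0). Let φ, ψ : G → G be additive endomorphisms such that B(φ(x), y) = B(x, ψ(y)) for all x, y ∈ G, and such that the kernels of φ and ψ have the same cardinality. Then the annihilator {y ∈ G : B(x,y) = 0 for all x with φ(x) = 0} of ker(φ) equals the image ψ(G). -/

import Mathlib

open Function

/-- The cast map `ℚ/ℤ → ℝ/ℤ`. -/
noncomputable def ratCircleToReal : AddCircle (1 : ℚ) →+ AddCircle (1 : ℝ) :=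
  QuotientAddGroup.map _ _ (Rat.castHom ℝ).toAddMonoidHom (by
    intro q hq
    obtain ⟨n, hn⟩ := AddSubgroup.mem_zmultiples_iff.mp hq
    refine AddSubgroup.mem_comap.mpr (AddSubgroup.mem_zmultiples_iff.mpr ⟨n, ?_⟩)
    push_cast [← hn]
    simp)

lemma ratCircleToReal_injective : Injective ratCircleToReal := by
  refine (injective_iff_map_eq_zero _).mpr fun a => ?_
  induction a using QuotientAddGroup.induction_on with
  | H q =>
    intro hq
    have hq' : ((q : ℝ) : AddCircle (1 : ℝ)) = 0 := hq
    obtain ⟨n, hn⟩ := (AddCircle.coe_eq_zero_iff _).mp hq'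
    refine (AddCircle.coe_eq_zero_iff _).mpr ⟨n, ?_⟩
    have : ((n • (1:ℚ) : ℚ) : ℝ) = ((q : ℚ) : ℝ) := by
      simp only [zsmul_eq_mul] at hn ⊢; push_cast at hn ⊢; linarith
    exact Rat.cast_injective this

noncomputable def homToAddChar (H : Type*) [AddCommGroup H] :
    (H →+ AddCircle (1 : ℚ)) → AddChar H ℂ := fun f =>
  { toFun := fun h => (AddCircle.toCircle (ratCircleToReal (f h)) : ℂ)
    map_zero_eq_one' := by simp [AddCircle.toCircle_zero]
    map_add_eq_mul' := fun a b => by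
      simp only [map_add, AddCircle.toCircle_add]; push_cast; ring }

lemma homToAddChar_injective (H : Type*) [AddCommGroup H] : Injective (homToAddChar H) := by
  intro f g h
  ext x
  have := congrArg (fun c => c x) (congrArg DFunLike.coe h)
  simp only [homToAddChar, AddChar.coe_mk] at this
  exact ratCircleToReal_injective
    (AddCircle.injective_toCircle one_ne_zero (Subtype.coe_injective this))

lemma finite_homAddCircle (H : Type*) [AddCommGroup H] [Finite H] :
    Finite (H →+ AddCircle (1 : ℚ)) :=
  Finite.of_injective _ (homToAddChar_injective H)

lemma card_homAddCircle_le (H : Type*) [AddCommGroup H] [Finite H] :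
    Nat.card (H →+ AddCircle (1 : ℚ)) ≤ Nat.card H := by
  cases nonempty_fintype H
  calc Nat.card (H →+ AddCircle (1 : ℚ)) ≤ Nat.card (AddChar H ℂ) :=
        Nat.card_le_card_of_injective _ (homToAddChar_injective H)
    _ ≤ Nat.card H := by
        rw [Nat.card_eq_fintype_card, Nat.card_eq_fintype_card]
        exact AddChar.card_addChar_le H ℂ

/-- Generic content of Lemma 5.4: for a nondegenerate bilinear pairing on a finite
abelian group and adjoint endomorphisms `φ`, `ψ` with kernels of equal cardinality,
the annihilator of `ker φ` is the image of `ψ`. -/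
theorem stmt_2 {G : Type*} [AddCommGroup G] [Finite G]
    (B : G → G → AddCircle (1 : ℚ))
    (hBl : ∀ x x' y : G, B (x + x') y = B x y + B x' y)
    (hBr : ∀ x y y' : G, B x (y + y') = B x y + B x y')
    (hndl : ∀ x : G, (∀ y : G, B x y = 0) → x = 0)
    (hndr : ∀ y : G, (∀ x : G, B x y = 0) → y = 0)
    (φ ψ : G →+ G)
    (hadj : ∀ x y : G, B (φ x) y = B x (ψ y))
    (hcard : Nat.card {x : G // φ x = 0} = Nat.card {y : G // ψ y = 0}) :
    {y : G | ∀ x : G, φ x = 0 → B x y = 0} = Set.range ψ := by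
  -- bundled partial maps
  let Br : G → G →+ AddCircle (1 : ℚ) := fun x => AddMonoidHom.mk' (B x) (hBr x)
  let Bl : G → G →+ AddCircle (1 : ℚ) := fun y => AddMonoidHom.mk' (fun x => B x y)
    (fun x x' => hBl x x' y)
  have hB0r : ∀ x, B x 0 = 0 := fun x => (Br x).map_zero
  have hB0l : ∀ y, B 0 y = 0 := fun y => (Bl y).map_zero
  -- the annihilator as a subgroup
  let A : AddSubgroup G :=
    { carrier := {y : G | ∀ x : G, φ x = 0 → B x y = 0}
      zero_mem' := fun x _ => hB0r x
      add_mem' := fun {a b} ha hb x hx => by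
        have : B x (a + b) = B x a + B x b := hBr x a b
        rw [this, ha x hx, hb x hx, add_zero]
      neg_mem' := fun {a} ha x hx => by
        have : B x (-a) = -(B x a) := (Br x).map_neg a
        rw [this, ha x hx, neg_zero] }
  -- range ψ ⊆ A
  have hsub : Set.range ψ ⊆ (A : Set G) := by
    rintro _ ⟨z, rfl⟩ x hx
    rw [← hadj, hx, hB0l]
  -- the injection from ker φ into Hom(G⧸A, ℚ/ℤ)
  have : Finite ((G ⧸ A) →+ AddCircle (1 : ℚ)) := finite_homAddCircle _
  let Φ : {x : G // φ x = 0} → ((G ⧸ A) →+ AddCircle (1 : ℚ)) := fun k =>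
    QuotientAddGroup.lift A (Br k.1) (fun a ha => ha k.1 k.2)
  have hΦinj : Injective Φ := by
    intro k k' h
    have hkk' : ∀ y : G, B k.1 y = B k'.1 y := fun y => by
      have := congrArg (fun f => f ((y : G) : G ⧸ A)) h
      exact this
    have : k.1 - k'.1 = 0 := hndl _ (fun y => by
      have : B (k.1 - k'.1) y = B k.1 y - B k'.1 y := (Bl y).map_sub k.1 k'.1
      rw [this, hkk' y, sub_self])
    exact Subtype.ext (sub_eq_zero.mp this)
  -- cardinalities
  have hKQ : Nat.card {x : G // φ x = 0} ≤ Nat.card (G ⧸ A) :=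
    le_trans (Nat.card_le_card_of_injective Φ hΦinj) (card_homAddCircle_le _)
  have hGA : Nat.card G = Nat.card (G ⧸ A) * Nat.card A :=
    AddSubgroup.card_eq_card_quotient_mul_card_addSubgroup A
  have hker : Nat.card {y : G // ψ y = 0} = Nat.card ψ.ker :=
    Nat.card_congr (Equiv.subtypeEquivRight fun y => Iff.symm AddMonoidHom.mem_ker)
  have hGrange : Nat.card G = Nat.card (G ⧸ ψ.ker) * Nat.card ψ.ker :=
    AddSubgroup.card_eq_card_quotient_mul_card_addSubgroup ψ.ker
  have hrange : Nat.card ψ.range = Nat.card (G ⧸ ψ.ker) :=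
    (Nat.card_congr (QuotientAddGroup.quotientKerEquivRange ψ).toEquiv).symm
  have hne : Nonempty {x : G // φ x = 0} := ⟨⟨0, map_zero φ⟩⟩
  have hKpos : 0 < Nat.card {x : G // φ x = 0} := Nat.card_pos
  -- Nat.card A ≤ Nat.card ψ.range
  have hAle : Nat.card A ≤ Nat.card ψ.range := by
    have h1 : Nat.card A * Nat.card {x : G // φ x = 0} ≤
        Nat.card ψ.range * Nat.card {x : G // φ x = 0} := by
      calc Nat.card A * Nat.card {x : G // φ x = 0}
          ≤ Nat.card A * Nat.card (G ⧸ A) := Nat.mul_le_mul_left _ hKQ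
        _ = Nat.card G := by rw [mul_comm]; exact hGA.symm
        _ = Nat.card ψ.range * Nat.card ψ.ker := by rw [hGrange, hrange]
        _ = Nat.card ψ.range * Nat.card {x : G // φ x = 0} := by rw [← hker, ← hcard]
    exact Nat.le_of_mul_le_mul_right h1 hKpos
  -- conclude
  have hAset : {y : G | ∀ x : G, φ x = 0 → B x y = 0} = (A : Set G) := rfl
  have hrset : Set.range ψ = (ψ.range : Set G) := rfl
  rw [hAset, hrset]
  refine (Set.eq_of_subset_of_ncard_le (hrset ▸ hsub) ?_ (Set.toFinite _)).symm
  rw [← Nat.card_coe_set_eq, ← Nat.card_coe_set_eq]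
  exact_mod_cast hAle
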